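/- No homeomorphic embedding of β(ω) into ω* = β(ω) \ ω has a fixed point: if h : β(ω) → ω* is a topological embedding, then h(x) ≠ x for all x ∈ β(ω). -/

import Mathlib

open Filter Set Topology

/-- Finite version of the three-set (3-coloring) lemma for a fixed-point-free map. -/
lemma kf_finite_coloring (g : ℕ → ℕ) (hg : ∀ m, g m ≠ m) (F : Finset ℕ) :
    ∃ c : ℕ → Fin 3, ∀ m ∈ F, c (g m) ≠ c m := by
  classical
  induction F using Finset.strongInductionOn with
  | _ F ih =>
  rcases F.eq_empty_or_nonempty with rfl | hFne
  · exact ⟨fun _ => 0, by simp⟩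
  -- the vertex set
  set V : Finset ℕ := F ∪ F.image g with hV
  have hFV : F ⊆ V := Finset.subset_union_left
  -- degree function
  set deg : ℕ → ℕ := fun v => (F.filter (fun m => g m = v)).card + (if v ∈ F then 1 else 0)
    with hdeg
  -- total degree = 2 |F|
  have hsum : ∑ v ∈ V, deg v = 2 * F.card := by
    have h1 : ∑ v ∈ V, (F.filter (fun m => g m = v)).card = F.card := by
      rw [← Finset.card_eq_sum_card_fiberwise]
      intro m hm
      exact Finset.mem_union_right _ (Finset.mem_image_of_mem g hm)
    have h2 : ∑ v ∈ V, (if v ∈ F then 1 else 0) = F.card := by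
      rw [Finset.sum_ite_mem, Finset.inter_eq_right.mpr hFV, Finset.sum_const, smul_eq_mul,
        mul_one]
    simp only [hdeg, Finset.sum_add_distrib, h1, h2]
    ring
  -- there is a vertex of degree ≤ 2
  have hex : ∃ v ∈ V, deg v ≤ 2 := by
    by_contra hc
    push_neg at hc
    have h3 : 3 * V.card ≤ ∑ v ∈ V, deg v := by
      calc 3 * V.card = ∑ _v ∈ V, 3 := by rw [Finset.sum_const]; ring
        _ ≤ ∑ v ∈ V, deg v := Finset.sum_le_sum fun v hv => hc v hv
    rw [hsum] at h3
    have hFVcard : F.card ≤ V.card := Finset.card_le_card hFV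
    have hV0 : V.card = 0 := by omega
    have : F.card = 0 := by omega
    exact hFne.ne_empty (Finset.card_eq_zero.mp this)
  obtain ⟨v, hvV, hvdeg⟩ := hex
  -- remove v
  set F' : Finset ℕ := F.filter (fun m => m ≠ v ∧ g m ≠ v) with hF'
  have hss : F' ⊂ F := by
    refine Finset.ssubset_iff_of_subset (Finset.filter_subset _ _) |>.mpr ?_
    rcases Finset.mem_union.mp hvV with hvF | hvI
    · exact ⟨v, hvF, by simp [hF']⟩
    · obtain ⟨m, hmF, hmv⟩ := Finset.mem_image.mp hvI
      exact ⟨m, hmF, by simp [hF', hmv]⟩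
  obtain ⟨c, hc⟩ := ih F' hss
  -- avoided colors
  set N : Finset (Fin 3) :=
    ((F.filter (fun m => g m = v)).image c) ∪ (if v ∈ F then {c (g v)} else ∅) with hN
  have hNcard : N.card ≤ 2 := by
    have h1 : ((F.filter (fun m => g m = v)).image c).card ≤
        (F.filter (fun m => g m = v)).card := Finset.card_image_le
    by_cases hvF : v ∈ F
    · have hfib : (F.filter (fun m => g m = v)).card ≤ 1 := by
        simp only [hdeg, hvF, if_pos] at hvdeg; omega
      calc N.card ≤ _ + _ := Finset.card_union_le _ _
        _ ≤ 1 + 1 := by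
            refine Nat.add_le_add (le_trans h1 hfib) ?_
            simp [hvF]
        _ = 2 := rfl
    · have hfib : (F.filter (fun m => g m = v)).card ≤ 2 := by
        simp only [hdeg, hvF, if_neg, not_false_iff] at hvdeg; omega
      calc N.card ≤ _ + _ := Finset.card_union_le _ _
        _ ≤ 2 + 0 := by
            refine Nat.add_le_add (le_trans h1 hfib) ?_
            simp [hvF]
        _ = 2 := rfl
  have hexi : ∃ i : Fin 3, i ∉ N := by
    by_contra hcon
    push_neg at hcon
    have : (Finset.univ : Finset (Fin 3)) ⊆ N := fun i _ => hcon i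
    have := Finset.card_le_card this
    simp at this
    omega
  obtain ⟨i, hiN⟩ := hexi
  refine ⟨Function.update c v i, ?_⟩
  intro m hmF
  by_cases hmv : m = v
  · subst hmv
    rw [Function.update_self, Function.update_of_ne (hg m)]
    intro hcontra
    apply hiN
    rw [← hcontra]
    exact Finset.mem_union_right _ (by simp [hmF])
  · by_cases hgmv : g m = v
    · rw [hgmv, Function.update_self, Function.update_of_ne hmv]
      intro hcontra
      apply hiN
      rw [hcontra]
      exact Finset.mem_union_left _ (Finset.mem_image_of_mem c (by simp [hmF, hgmv]))
    · rw [Function.update_of_ne hgmv, Function.update_of_ne hmv]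
      exact hc m (by simp [hF', hmF, hmv, hgmv])

/-- A color class of an ultrafilter: some class belongs to the ultrafilter. -/
lemma kf_exists_color (p : Ultrafilter ℕ) (c : ℕ → Fin 3) : ∃ i, {m | c m = i} ∈ p := by
  obtain ⟨i, hi⟩ := Ultrafilter.eq_pure_of_finite (p.map c)
  refine ⟨i, ?_⟩
  have : {i} ∈ p.map c := by rw [hi]; exact singleton_mem_pure
  rw [Ultrafilter.mem_map] at this
  have h : c ⁻¹' {i} = {m | c m = i} := by ext m; simp
  rwa [h] at this

/-- The three-set lemma in coloring form: every fixed-point-free map on `ℕ`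
admits a 3-coloring with no monochromatic edge. -/
lemma kf_coloring (g : ℕ → ℕ) (hg : ∀ m, g m ≠ m) :
    ∃ c : ℕ → Fin 3, ∀ m, c (g m) ≠ c m := by
  classical
  choose cs hcs using fun n => kf_finite_coloring g hg (Finset.range n)
  set q : Ultrafilter ℕ := Filter.hyperfilter ℕ with hq
  choose col hcol using fun m => kf_exists_color q (fun n => cs n m)
  refine ⟨col, fun m => ?_⟩
  have h1 : {n | cs n m = col m} ∈ q := hcol m
  have h2 : {n | cs n (g m) = col (g m)} ∈ q := hcol (g m)
  have h3 : {n | m < n} ∈ q := by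
    refine Filter.mem_hyperfilter_of_finite_compl ?_
    have : {n | m < n}ᶜ = {n | n ≤ m} := by ext n; simp
    rw [this]
    exact Set.finite_le_nat m
  have : ({n | cs n m = col m} ∩ ({n | cs n (g m) = col (g m)} ∩ {n | m < n}) : Set ℕ) ∈ q :=
    Filter.inter_mem h1 (Filter.inter_mem h2 h3)
  obtain ⟨n, hn1, hn2, hn3⟩ := Ultrafilter.nonempty_of_mem this
  have := hcs n m (Finset.mem_range.mpr hn3)
  rw [hn1, hn2] at this
  exact fun hcontra => this (by rw [hcontra])

/-- If an ultrafilter is fixed by pushforward along `g`, then `g` is the identity almost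
everywhere. -/
lemma kf_ae_fixed (p : Ultrafilter ℕ) (g : ℕ → ℕ)
    (hmap : ∀ S : Set ℕ, g ⁻¹' S ∈ p ↔ S ∈ p) : {m | g m = m} ∈ p := by
  classical
  by_contra hE
  have hE' : {m | g m ≠ m} ∈ p := by
    rw [← Ultrafilter.compl_mem_iff_notMem] at hE
    have h : {m | g m = m}ᶜ = {m | g m ≠ m} := by ext m; simp
    rwa [h] at hE
  set g' : ℕ → ℕ := fun m => if g m = m then m + 1 else g m with hg'
  have hfpf : ∀ m, g' m ≠ m := by
    intro m
    by_cases hc : g m = m <;> simp [hg', hc]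
  obtain ⟨c, hc⟩ := kf_coloring g' hfpf
  obtain ⟨i, hi⟩ := kf_exists_color p c
  have h2 : g ⁻¹' {m | c m = i} ∈ p := (hmap _).mpr hi
  have : ({m | g m ≠ m} ∩ ({m | c m = i} ∩ g ⁻¹' {m | c m = i}) : Set ℕ) ∈ p :=
    Filter.inter_mem hE' (Filter.inter_mem hi h2)
  obtain ⟨m, hm1, hm2, hm3⟩ := Ultrafilter.nonempty_of_mem this
  have hm1' : g m ≠ m := hm1
  have hgm : g' m = g m := by simp [hg', hm1']
  have := hc m
  rw [hgm] at this
  exact this (by rw [Set.mem_preimage, Set.mem_setOf_eq] at hm3; rw [hm3, hm2])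

/-- Frolík's lemma, combinatorial core: an ultrafilter `p` cannot be the `p`-sum of a
discrete family of ultrafilters `u n` with `u n ≠ pure n`. -/
lemma kf_frolik (p : Ultrafilter ℕ) (u : ℕ → Ultrafilter ℕ)
    (hfree : ∀ n, ({n} : Set ℕ) ∉ u n)
    (B : ℕ → Set ℕ) (hB : ∀ n, B n ∈ u n) (hsep : ∀ m n, m ≠ n → B n ∉ u m)
    (hsum : ∀ S : Set ℕ, S ∈ p ↔ {n | S ∈ u n} ∈ p) : False := by
  classical
  -- disjointified discrete family
  set A : ℕ → Set ℕ := fun n => (B n \ ⋃ m ∈ Set.Iio n, B m) \ {n} with hA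
  have hAu : ∀ n, A n ∈ u n := by
    intro n
    have h1 : (⋃ m ∈ Set.Iio n, B m) ∉ u n := by
      intro hcon
      rw [Ultrafilter.finite_biUnion_mem_iff (Set.finite_Iio n)] at hcon
      obtain ⟨m, hm, hmem⟩ := hcon
      exact hsep n m (Nat.ne_of_lt hm).symm hmem
    have h2 : B n \ (⋃ m ∈ Set.Iio n, B m) ∈ u n :=
      (Ultrafilter.diff_mem_iff _).mpr ⟨hB n, h1⟩
    exact (Ultrafilter.diff_mem_iff _).mpr ⟨h2, hfree n⟩
  have hnA : ∀ n, n ∉ A n := fun n hn => hn.2 rfl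
  have hAB : ∀ n, A n ⊆ B n := fun n m hm => hm.1.1
  have hdisj : ∀ m n, m ≠ n → A m ∩ A n = ∅ := by
    intro m n hmn
    rcases Nat.lt_or_ge m n with h | h
    · ext x
      simp only [Set.mem_inter_iff, Set.mem_empty_iff_false, iff_false, not_and]
      intro hxm hxn
      exact hxn.1.2 (Set.mem_biUnion (Set.mem_Iio.mpr h) (hAB m hxm))
    · have hlt : n < m := lt_of_le_of_ne h (Ne.symm hmn)
      ext x
      simp only [Set.mem_inter_iff, Set.mem_empty_iff_false, iff_false, not_and]
      intro hxm hxn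
      exact hxm.1.2 (Set.mem_biUnion (Set.mem_Iio.mpr hlt) (hAB n hxn))
  -- the index map
  set g : ℕ → ℕ := fun m => if h : ∃ n, m ∈ A n then h.choose else m with hg
  have hgspec : ∀ {m n}, m ∈ A n → g m = n := by
    intro m n hmn
    have hex : ∃ n, m ∈ A n := ⟨n, hmn⟩
    have hch : m ∈ A hex.choose := hex.choose_spec
    have : hex.choose = n := by
      by_contra hne
      have := hdisj _ _ hne
      have : m ∈ A hex.choose ∩ A n := ⟨hch, hmn⟩
      rw [hdisj _ _ hne] at this
      exact this
    rw [hg]; simp only [dif_pos hex]; exact this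
  -- D, the union of the A n, is in p
  set D : Set ℕ := {m | ∃ n, m ∈ A n} with hD
  have hDp : D ∈ p := by
    rw [hsum]
    have : {n | D ∈ u n} = Set.univ := by
      ext n
      simp only [Set.mem_setOf_eq, Set.mem_univ, iff_true]
      exact Filter.mem_of_superset (hAu n) fun m hm => ⟨n, hm⟩
    rw [this]
    exact Filter.univ_mem
  -- pushforward of p along g is p
  have hmap : ∀ S : Set ℕ, g ⁻¹' S ∈ p ↔ S ∈ p := by
    intro S
    set φ : Set ℕ := {m | ∃ n ∈ S, m ∈ A n} with hφ
    have hφD : φ ⊆ D := fun m ⟨n, _, hm⟩ => ⟨n, hm⟩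
    have hkey : g ⁻¹' S ∩ D = φ := by
      ext m
      constructor
      · rintro ⟨hmS, n, hmn⟩
        refine ⟨n, ?_, hmn⟩
        rwa [Set.mem_preimage, hgspec hmn] at hmS
      · rintro ⟨n, hnS, hmn⟩
        exact ⟨by rw [Set.mem_preimage, hgspec hmn]; exact hnS, n, hmn⟩
    have hφp : φ ∈ p ↔ S ∈ p := by
      rw [hsum φ]
      have : {n | φ ∈ u n} = S := by
        ext n
        simp only [Set.mem_setOf_eq]
        constructor
        · intro hmem
          by_contra hnS
          have hint : φ ∩ A n ∈ u n := Filter.inter_mem hmem (hAu n)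
          obtain ⟨m, ⟨n', hn'S, hmn'⟩, hmn⟩ := Ultrafilter.nonempty_of_mem hint
          have hne : n' ≠ n := fun e => hnS (e ▸ hn'S)
          have : m ∈ A n' ∩ A n := ⟨hmn', hmn⟩
          rw [hdisj _ _ hne] at this
          exact this
        · intro hnS
          exact Filter.mem_of_superset (hAu n) fun m hm => ⟨n, hnS, hm⟩
      rw [this]
    constructor
    · intro h
      have : g ⁻¹' S ∩ D ∈ p := Filter.inter_mem h hDp
      rw [hkey] at this
      exact hφp.mp this
    · intro h
      have hφmem : φ ∈ p := hφp.mpr h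
      have : g ⁻¹' S ∩ D ∈ p := by rw [hkey]; exact hφmem
      exact Filter.mem_of_superset this Set.inter_subset_left
  -- conclude
  have hfix := kf_ae_fixed p g hmap
  have : ({m | g m = m} ∩ D : Set ℕ) ∈ p := Filter.inter_mem hfix hDp
  obtain ⟨m, hm1, n, hm2⟩ := Ultrafilter.nonempty_of_mem this
  have : g m = n := hgspec hm2
  have hmn : m = n := by rw [← this]; exact (hm1 : g m = m).symm
  exact hnA n (hmn ▸ hm2)

/-- An ultrafilter containing a singleton is principal. -/
lemma kf_eq_pure {v : Ultrafilter ℕ} {a : ℕ} (h : ({a} : Set ℕ) ∈ v) : v = pure a := by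
  obtain ⟨x, hx, hvx⟩ := Ultrafilter.eq_pure_of_finite_mem (Set.finite_singleton a) h
  rwa [Set.mem_singleton_iff.mp hx] at hvx

/-- Membership in `joinM` of an ultrafilter of ultrafilters. -/
lemma kf_mem_joinM {v : Ultrafilter (Ultrafilter ℕ)} {S : Set ℕ} :
    S ∈ joinM v ↔ {w : Ultrafilter ℕ | S ∈ w} ∈ v := Iff.rfl

/-- The fixed-point-free theorem on the ultrafilter space: an embedding of
`Ultrafilter ℕ` into itself avoiding all principal ultrafilters has no fixed point. -/
lemma kf_ultra (H : Ultrafilter ℕ → Ultrafilter ℕ) (hemb : Topology.IsEmbedding H)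
    (hrange : ∀ y n, H y ≠ pure n) (p : Ultrafilter ℕ) (hp : H p = p) : False := by
  classical
  set u : ℕ → Ultrafilter ℕ := fun n => H (pure n) with hu
  have hfree : ∀ n, ({n} : Set ℕ) ∉ u n := fun n h => hrange (pure n) n (kf_eq_pure h)
  -- separating sets from the embedding
  have hsepV : ∀ n : ℕ, ∃ B : Set ℕ, B ∈ u n ∧ ∀ m, m ≠ n → B ∉ u m := by
    intro n
    have hopen : IsOpen ({pure n} : Set (Ultrafilter ℕ)) := by
      have : ({pure n} : Set (Ultrafilter ℕ)) = {w | ({n} : Set ℕ) ∈ w} := by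
        ext w
        simp only [Set.mem_singleton_iff, Set.mem_setOf_eq]
        exact ⟨fun h => h ▸ singleton_mem_pure, kf_eq_pure⟩
      rw [this]
      exact ultrafilter_isOpen_basic _
    rw [hemb.eq_induced] at hopen
    obtain ⟨V, hVopen, hVpre⟩ := isOpen_induced_iff.mp hopen
    have hunV : u n ∈ V := by
      have : pure n ∈ H ⁻¹' V := by rw [hVpre]; exact rfl
      exact this
    obtain ⟨t, ⟨B, rfl⟩, hBt, htV⟩ :=
      ultrafilterBasis_is_basis.exists_subset_of_mem_open hunV hVopen
    refine ⟨B, hBt, fun m hmn hBm => ?_⟩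
    have : u m ∈ V := htV hBm
    have : pure m ∈ H ⁻¹' V := this
    rw [hVpre] at this
    exact hmn (Ultrafilter.pure_injective this)
  choose B hB hsep using hsepV
  -- the sum identity
  have hsum : ∀ S : Set ℕ, S ∈ p ↔ {n | S ∈ u n} ∈ p := by
    set v : Ultrafilter (Ultrafilter ℕ) := p.map (fun n => H (pure n)) with hv
    have htend : ↑v ≤ 𝓝 p := by
      have h1 : Filter.Tendsto (pure : ℕ → Ultrafilter ℕ) p (𝓝 p) :=
        Ultrafilter.tendsto_pure_self p
      have h2 : Filter.Tendsto (fun n => H (pure n)) p (𝓝 (H p)) :=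
        (hemb.continuous.tendsto p).comp h1
      rw [hp] at h2
      exact h2
    have hjoin : p = joinM v := ultrafilter_converges_iff.mp htend
    intro S
    conv_lhs => rw [hjoin]
    rw [kf_mem_joinM]
    rfl
  exact kf_frolik p u hfree B hB (fun m n hmn => hsep n m hmn) hsum

/-- The Stone–Čech compactification of `ℕ` is homeomorphic to the ultrafilter space,
with the homeomorphism matching `stoneCechUnit` with `pure`. -/
noncomputable def kf_equiv : StoneCech ℕ ≃ₜ Ultrafilter ℕ := by
  have hpure : Continuous (pure : ℕ → Ultrafilter ℕ) := continuous_of_discreteTopology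
  let f : StoneCech ℕ → Ultrafilter ℕ := stoneCechExtend hpure
  let g : Ultrafilter ℕ → StoneCech ℕ := Ultrafilter.extend stoneCechUnit
  have hf : Continuous f := continuous_stoneCechExtend hpure
  have hg : Continuous g := continuous_ultrafilter_extend _
  have hfu : f ∘ stoneCechUnit = pure := stoneCechExtend_extends hpure
  have hgu : g ∘ pure = stoneCechUnit := ultrafilter_extend_extends stoneCechUnit
  have hgf : g ∘ f = id := by
    apply stoneCech_hom_ext (hg.comp hf) continuous_id
    rw [Function.comp_assoc, hfu, hgu]
    rfl
  have hfg : f ∘ g = id := by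
    apply Continuous.ext_on denseRange_pure (hf.comp hg) continuous_id
    rintro _ ⟨n, rfl⟩
    show f (g (pure n)) = pure n
    have h1 : g (pure n) = stoneCechUnit n := congrFun hgu n
    rw [h1]
    exact congrFun hfu n
  exact {
    toFun := f
    invFun := g
    left_inv := fun x => congrFun hgf x
    right_inv := fun y => congrFun hfg y
    continuous_toFun := hf
    continuous_invFun := hg }

lemma kf_equiv_symm_pure (n : ℕ) : kf_equiv.symm (pure n) = stoneCechUnit n := by
  show Ultrafilter.extend stoneCechUnit (pure n) = stoneCechUnit n
  exact congrFun (ultrafilter_extend_extends stoneCechUnit) n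

/-- The Katětov–Frolík fixed-point theorem: no homeomorphic embedding of `β(ω)` into
`ω* = β(ω) \ ω` has a fixed point. -/
theorem no_fixed_point_of_embedding_into_remainder (h : StoneCech ℕ → StoneCech ℕ)
    (hemb : Topology.IsEmbedding h)
    (hrange : ∀ x, h x ∉ Set.range (stoneCechUnit : ℕ → StoneCech ℕ)) :
    ∀ x, h x ≠ x := by
  intro x hx
  set e := kf_equiv with he
  set H : Ultrafilter ℕ → Ultrafilter ℕ := fun w => e (h (e.symm w)) with hH
  have hembH : Topology.IsEmbedding H :=
    (e.isEmbedding.comp hemb).comp e.symm.isEmbedding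
  have hrangeH : ∀ y n, H y ≠ pure n := by
    intro y n hcon
    apply hrange (e.symm y)
    refine ⟨n, ?_⟩
    have := congrArg e.symm hcon
    rw [hH] at this
    simp only [Homeomorph.symm_apply_apply] at this
    rw [this, kf_equiv_symm_pure]
  have hfix : H (e x) = e x := by
    simp only [hH, Homeomorph.symm_apply_apply, hx]
  exact kf_ultra H hembH hrangeH (e x) hfix
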